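/- Let ρ be the real root of t³ − t − 1, and suppose n is such that 2ρ^{−n/2} < 1/10 and cos(nω) ≠ 0, where α = |α|e^{iω} is a complex root. Then ⌊ρ^n⌋ = T_n − 1 if cos(nω) > 0, and ⌊ρ^n⌋ = T_n if cos(nω) < 0, where T_n = ρ^n + α^n + ᾱ^n ∈ ℤ. -/

import Mathlib

lemma root_gt_one' (t : ℝ) (h : t ^ 3 - t - 1 = 0) : 1 < t := by
  by_contra hle
  push_neg at hle
  nlinarith [sq_nonneg t, sq_nonneg (t - 1), sq_nonneg (t + 1), sq_nonneg (t^2 - 1)]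

lemma root_unique' (a b : ℝ) (ha : a ^ 3 - a - 1 = 0) (hb : b ^ 3 - b - 1 = 0)
    (ha1 : 1 < a) (hb1 : 1 < b) : a = b := by
  have key : (a - b) * (a ^ 2 + a * b + b ^ 2 - 1) = 0 := by nlinarith
  have hpos : a ^ 2 + a * b + b ^ 2 - 1 > 0 := by nlinarith
  rcases mul_eq_zero.mp key with h | h
  · linarith
  · linarith

set_option maxHeartbeats 1000000 in
theorem stmt_12 (ρ : ℝ) (hρ : ρ ^ 3 - ρ - 1 = 0) (hρ1 : 1 < ρ)
    (α : ℂ) (hα : α ^ 3 - α - 1 = 0) (him : α.im ≠ 0)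
    (ω : ℝ) (hω : ω ∈ Set.Ioo 0 Real.pi)
    (hαω : α = (‖α‖ : ℂ) * Complex.exp (ω * Complex.I))
    (n : ℕ) (T : ℤ)
    (hT : (T : ℂ) = (ρ : ℂ) ^ n + α ^ n + (starRingEnd ℂ α) ^ n)
    (hsmall : 2 * ρ ^ (-(n : ℝ) / 2) < 1 / 10)
    (hcos : Real.cos (n * ω) ≠ 0) :
    (0 < Real.cos (n * ω) → ⌊ρ ^ n⌋ = T - 1) ∧
    (Real.cos (n * ω) < 0 → ⌊ρ ^ n⌋ = T) := by
  set x := α.re with hx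
  set y := α.im with hy
  have hre : x ^ 3 - 3 * x * y ^ 2 - x - 1 = 0 := by
    have := congrArg Complex.re hα
    simp [pow_succ, Complex.mul_re, Complex.mul_im, Complex.sub_re, Complex.one_re] at this
    ring_nf at this ⊢
    linarith
  have him2 : 3 * x ^ 2 * y - y ^ 3 - y = 0 := by
    have := congrArg Complex.im hα
    simp [pow_succ, Complex.mul_re, Complex.mul_im, Complex.sub_im, Complex.one_im] at this
    ring_nf at this ⊢
    linarith
  have hy2 : y ^ 2 = 3 * x ^ 2 - 1 := by
    have h0 : y * (3 * x ^ 2 - y ^ 2 - 1) = 0 := by ring_nf; ring_nf at him2; linarith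
    rcases mul_eq_zero.mp h0 with h | h
    · exact absurd h him
    · linarith
  have hx8 : 8 * x ^ 3 - 2 * x + 1 = 0 := by nlinarith [hre, hy2]
  have hr : (-2 * x) ^ 3 - (-2 * x) - 1 = 0 := by nlinarith [hx8]
  have hr1 : 1 < -2 * x := root_gt_one' _ hr
  have hrρ : (-2 * x) = ρ := root_unique' _ _ hr hρ hr1 hρ1
  set A := ‖α‖ with hA
  have hρpos : (0:ℝ) < ρ := by linarith
  have hA2 : A ^ 2 = x ^ 2 + y ^ 2 := by
    rw [hA, Complex.sq_norm, Complex.normSq_apply]; ring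
  have hA2' : A ^ 2 = ρ⁻¹ := by
    have h1 : A ^ 2 = ρ ^ 2 - 1 := by rw [hA2, hy2]; nlinarith [hrρ]
    have h2 : ρ * (ρ ^ 2 - 1) = 1 := by nlinarith [hρ]
    rw [h1]
    field_simp
    nlinarith [h2]
  have hα0 : α ≠ 0 := fun h => him (by simp [hy, h])
  have hApos : 0 < A := by
    rw [hA]
    exact norm_pos_iff.mpr hα0
  have hAn : A ^ n = ρ ^ (-(n : ℝ) / 2) := by
    have e1 : (ρ ^ (-(n:ℝ)/2)) ^ 2 = ρ ^ (-(n:ℝ)) := by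
      rw [← Real.rpow_natCast (ρ ^ (-(n:ℝ)/2)) 2, ← Real.rpow_mul hρpos.le]
      congr 1
      push_cast
      ring
    have e2 : (ρ⁻¹) ^ n = ρ ^ (-(n:ℝ)) := by
      rw [Real.rpow_neg hρpos.le, Real.rpow_natCast, inv_pow]
    have key : (A ^ n) ^ 2 = (ρ ^ (-(n:ℝ)/2)) ^ 2 := by
      rw [← pow_mul, mul_comm, pow_mul, hA2', e2, e1]
    have h1 : (0:ℝ) ≤ A ^ n := by positivity
    have h2 : (0:ℝ) ≤ ρ ^ (-(n:ℝ)/2) := (Real.rpow_pos_of_pos hρpos _).le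
    nlinarith [key]
  have hAnpos : 0 < A ^ n := by positivity
  -- real part of hT
  have hαn : (α ^ n).re = A ^ n * Real.cos (n * ω) := by
    have h1 : α ^ n = ((A ^ n : ℝ) : ℂ) * Complex.exp (((n * ω : ℝ) : ℝ) * Complex.I) := by
      rw [hαω, mul_pow, ← Complex.exp_nat_mul]
      push_cast
      ring_nf
    rw [h1, Complex.re_ofReal_mul, Complex.exp_ofReal_mul_I_re]
  have hconjre : ((starRingEnd ℂ α) ^ n).re = (α ^ n).re := by
    rw [← map_pow]; exact Complex.conj_re _
  have hTR : (T : ℝ) = ρ ^ n + 2 * (A ^ n * Real.cos (n * ω)) := by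
    have h2 := congrArg Complex.re hT
    rw [Complex.add_re, Complex.add_re, hconjre, hαn, ← Complex.ofReal_pow,
      Complex.ofReal_re, Complex.intCast_re] at h2
    linarith
  set c := Real.cos (n * ω) with hc
  have hb : 2 * A ^ n < 1 / 10 := by rw [hAn]; exact hsmall
  have hc1 : |c| ≤ 1 := Real.abs_cos_le_one _
  have habs : |2 * (A ^ n * c)| < 1 / 10 := by
    rw [abs_mul, abs_mul, abs_of_nonneg (by norm_num : (0:ℝ) ≤ 2), abs_of_pos hAnpos]
    calc 2 * (A ^ n * |c|) ≤ 2 * (A ^ n * 1) := by nlinarith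
    _ < 1/10 := by linarith
  constructor
  · intro hpos
    have hεpos : 0 < 2 * (A ^ n * c) := by positivity
    rw [Int.floor_eq_iff]
    constructor
    · push_cast
      have := abs_lt.mp habs
      linarith
    · push_cast
      linarith
  · intro hneg
    have hεneg : 2 * (A ^ n * c) < 0 := by nlinarith
    rw [Int.floor_eq_iff]
    constructor
    · push_cast
      linarith
    · push_cast
      have := abs_lt.mp habs
      linarith
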